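/- Let A ∈ ℝ^{N×N} be symmetric with ‖A‖₂ = λ₀ = |λ₁| and suppose all eigenvalues λ of A with |λ| = ‖A‖₂ have the same sign (say positive). Then for every z̃ ∈ ℝ and every c̃ with 0 < c̃ ≤ (∑_{j=0}^{N-1} (z̃_N^T v_j)²/(λ₀ + λ_j))^{-1}, the rank-1 Hankel matrix c̃·z̃_N·z̃_N^T satisfies ‖A - c̃·z̃_N·z̃_N^T‖₂ = ‖A‖₂. -/

import Mathlib

open Matrix

noncomputable def rzvec (N : ℕ) (z : ℝ) : Fin N → ℝ :=
  fun k => (Real.sqrt (∑ j : Fin N, z ^ (2 * (j : ℕ))))⁻¹ * z ^ (k : ℕ)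

noncomputable def rvnorm {ι : Type*} [Fintype ι] (x : ι → ℝ) : ℝ :=
  Real.sqrt (∑ i, x i ^ 2)

noncomputable def rspecNorm {M N : ℕ} (A : Matrix (Fin M) (Fin N) ℝ) : ℝ :=
  sSup {r : ℝ | ∃ x : Fin N → ℝ, rvnorm x = 1 ∧ r = rvnorm (A.mulVec x)}

/-- If the largest singular value is multiple (`λ₀ = |λ₁| = ‖A‖₂`) and all
eigenvalues of maximal modulus are positive, then every rank-1 Hankel matrix
`c̃·z̃_N·z̃_Nᵀ` with `0 < c̃ ≤ (∑_j (z̃_Nᵀ v_j)²/(λ₀+λ_j))⁻¹` achieves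
`‖A - c̃·z̃_N·z̃_Nᵀ‖₂ = ‖A‖₂`. -/
theorem stmt14 (N : ℕ) (hN : 2 ≤ N) (A : Matrix (Fin N) (Fin N) ℝ)
    (hsymm : A.IsSymm) (hrank : 1 < A.rank)
    (lam : Fin N → ℝ) (v : Fin N → Fin N → ℝ)
    (heig : ∀ i, A.mulVec (v i) = lam i • v i)
    (horth : ∀ i j, v i ⬝ᵥ v j = if i = j then (1 : ℝ) else 0)
    (hord : ∀ i j : Fin N, i ≤ j → |lam j| ≤ |lam i|)
    (hlam0 : lam ⟨0, by omega⟩ = rspecNorm A)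
    (hmult : |lam ⟨1, by omega⟩| = lam ⟨0, by omega⟩)
    (hsign : ∀ j, |lam j| = lam ⟨0, by omega⟩ → 0 < lam j) :
    ∀ zt ct : ℝ, 0 < ct →
      ct ≤ (∑ j : Fin N, (rzvec N zt ⬝ᵥ v j) ^ 2 / (lam ⟨0, by omega⟩ + lam j))⁻¹ →
      rspecNorm (A - ct • vecMulVec (rzvec N zt) (rzvec N zt)) = rspecNorm A := by
  have h0N : 0 < N := by omega
  have h1N : 1 < N := by omega
  intro zt ct hct hle
  have hle' : ct ≤ (∑ j : Fin N, ((rzvec N zt) ⬝ᵥ v j) ^ 2 / (lam ⟨0, h0N⟩ + lam j))⁻¹ := hle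
  clear hle
  set z := rzvec N zt with hzdef
  set l0 : ℝ := lam ⟨0, h0N⟩ with hl0def
  -- symmetry of A as a bilinear form
  have hAsym : ∀ x y : Fin N → ℝ, x ⬝ᵥ (A *ᵥ y) = (A *ᵥ x) ⬝ᵥ y := by
    intro x y
    rw [Matrix.dotProduct_mulVec, ← Matrix.mulVec_transpose, hsymm]
  -- Parseval
  have hparse : ∀ x y : Fin N → ℝ, x ⬝ᵥ y = ∑ j, (x ⬝ᵥ v j) * (y ⬝ᵥ v j) := by
    set V : Matrix (Fin N) (Fin N) ℝ := Matrix.of v with hV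
    have hVVt : V * Vᵀ = 1 := by
      ext i j
      simpa [Matrix.mul_apply, Matrix.one_apply, hV, dotProduct] using horth i j
    have hVtV : Vᵀ * V = 1 := mul_eq_one_comm.mp hVVt
    intro x y
    calc x ⬝ᵥ y = ((Vᵀ * V) *ᵥ x) ⬝ᵥ y := by rw [hVtV, Matrix.one_mulVec]
    _ = ((V *ᵥ x) ᵥ* V) ⬝ᵥ y := by rw [← Matrix.mulVec_mulVec, Matrix.mulVec_transpose]
    _ = (V *ᵥ x) ⬝ᵥ (V *ᵥ y) := by rw [← Matrix.dotProduct_mulVec]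
    _ = ∑ j, (v j ⬝ᵥ x) * (v j ⬝ᵥ y) := rfl
    _ = ∑ j, (x ⬝ᵥ v j) * (y ⬝ᵥ v j) := by
        exact Finset.sum_congr rfl fun j _ => by rw [dotProduct_comm (v j) x, dotProduct_comm (v j) y]
  -- quadratic form of A in eigencoordinates
  have hqA : ∀ x : Fin N → ℝ, x ⬝ᵥ (A *ᵥ x) = ∑ j, lam j * (x ⬝ᵥ v j) ^ 2 := by
    intro x
    rw [hparse x (A *ᵥ x)]
    refine Finset.sum_congr rfl fun j _ => ?_
    have h1 : (A *ᵥ x) ⬝ᵥ v j = lam j * (x ⬝ᵥ v j) := by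
      rw [← hAsym, heig j, dotProduct_smul, smul_eq_mul]
    rw [h1]; ring
  -- mulVec of the rank one perturbation
  have hBmul : ∀ x : Fin N → ℝ, (vecMulVec z z) *ᵥ x = (z ⬝ᵥ x) • z := by
    intro x; funext i
    simp only [Matrix.mulVec, Matrix.vecMulVec_apply, dotProduct, Pi.smul_apply, smul_eq_mul,
      Finset.sum_mul]
    exact Finset.sum_congr rfl fun j _ => by ring
  set B := vecMulVec z z with hB
  set E := A - ct • B with hE
  have hEmul : ∀ x : Fin N → ℝ, E *ᵥ x = A *ᵥ x - (ct * (z ⬝ᵥ x)) • z := by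
    intro x
    rw [hE, Matrix.sub_mulVec, Matrix.smul_mulVec, hBmul, smul_smul]
  have hEbil : ∀ x y : Fin N → ℝ,
      x ⬝ᵥ (E *ᵥ y) = x ⬝ᵥ (A *ᵥ y) - ct * (z ⬝ᵥ y) * (x ⬝ᵥ z) := by
    intro x y
    rw [hEmul, dotProduct_sub, dotProduct_smul, smul_eq_mul]
  have hEsym : ∀ x y : Fin N → ℝ, x ⬝ᵥ (E *ᵥ y) = y ⬝ᵥ (E *ᵥ x) := by
    intro x y
    rw [hEbil, hEbil, hAsym x y, dotProduct_comm (A *ᵥ x) y, dotProduct_comm x z,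
      dotProduct_comm y z]
    ring
  -- eigenvalue facts
  have hl1pos : 0 < lam ⟨1, h1N⟩ := hsign _ hmult
  have hl1 : lam ⟨1, h1N⟩ = l0 := by rw [← hmult, abs_of_pos hl1pos]
  have hl0pos : 0 < l0 := hl1 ▸ hl1pos
  have habsle : ∀ j, |lam j| ≤ l0 := by
    intro j
    have h := hord ⟨0, h0N⟩ j (by simp [Fin.le_def])
    rwa [abs_of_pos hl0pos] at h
  have hmu : ∀ j, 0 < l0 + lam j := by
    intro j
    have h1 := (abs_le.mp (habsle j)).1
    rcases lt_or_eq_of_le h1 with h | h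
    · linarith
    · exfalso
      have ha : |lam j| = l0 := by rw [← h, abs_neg, abs_of_pos hl0pos]
      have := hsign j ha
      rw [← h] at this
      linarith
  -- the quadratic-form bound |xᵀEx| ≤ l0 (xᵀx)
  have hq : ∀ x : Fin N → ℝ, |x ⬝ᵥ (E *ᵥ x)| ≤ l0 * (x ⬝ᵥ x) := by
    intro x
    have hxx : x ⬝ᵥ x = ∑ j, (x ⬝ᵥ v j) ^ 2 := by
      rw [hparse x x]
      exact Finset.sum_congr rfl fun j _ => (sq _).symm
    have hup : x ⬝ᵥ (E *ᵥ x) ≤ l0 * (x ⬝ᵥ x) := by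
      have h1 : x ⬝ᵥ (A *ᵥ x) ≤ l0 * (x ⬝ᵥ x) := by
        rw [hqA, hxx, Finset.mul_sum]
        refine Finset.sum_le_sum fun j _ => ?_
        have h2 := le_trans (le_abs_self (lam j)) (habsle j)
        nlinarith [sq_nonneg (x ⬝ᵥ v j)]
      have h2 : 0 ≤ ct * (z ⬝ᵥ x) * (x ⬝ᵥ z) := by
        rw [dotProduct_comm x z]
        nlinarith [sq_nonneg (z ⬝ᵥ x), hct.le]
      rw [hEbil]; linarith
    have hlow : -(l0 * (x ⬝ᵥ x)) ≤ x ⬝ᵥ (E *ᵥ x) := by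
      have hT : x ⬝ᵥ (A *ᵥ x) + l0 * (x ⬝ᵥ x) = ∑ j, (l0 + lam j) * (x ⬝ᵥ v j) ^ 2 := by
        rw [hqA, hxx, Finset.mul_sum, ← Finset.sum_add_distrib]
        exact Finset.sum_congr rfl fun j _ => by ring
      set T := ∑ j, (l0 + lam j) * (x ⬝ᵥ v j) ^ 2 with hTdef
      set S := ∑ j : Fin N, (z ⬝ᵥ v j) ^ 2 / (l0 + lam j) with hSdef
      have hSnn : 0 ≤ S :=
        Finset.sum_nonneg fun j _ => div_nonneg (sq_nonneg _) (hmu j).le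
      have hTnn : 0 ≤ T :=
        Finset.sum_nonneg fun j _ => mul_nonneg (hmu j).le (sq_nonneg _)
      have hcs : (z ⬝ᵥ x) ^ 2 ≤ S * T := by
        rw [hparse z x]
        have h := Finset.sum_mul_sq_le_sq_mul_sq Finset.univ
          (fun j : Fin N => (z ⬝ᵥ v j) / Real.sqrt (l0 + lam j))
          (fun j : Fin N => Real.sqrt (l0 + lam j) * (x ⬝ᵥ v j))
        have e1 : ∀ j : Fin N,
            (z ⬝ᵥ v j) / Real.sqrt (l0 + lam j) * (Real.sqrt (l0 + lam j) * (x ⬝ᵥ v j))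
              = (z ⬝ᵥ v j) * (x ⬝ᵥ v j) := by
          intro j
          have hs : Real.sqrt (l0 + lam j) ≠ 0 := ne_of_gt (Real.sqrt_pos.mpr (hmu j))
          field_simp
        have e2 : ∀ j : Fin N,
            ((z ⬝ᵥ v j) / Real.sqrt (l0 + lam j)) ^ 2 = (z ⬝ᵥ v j) ^ 2 / (l0 + lam j) := by
          intro j
          rw [div_pow, Real.sq_sqrt (hmu j).le]
        have e3 : ∀ j : Fin N,
            (Real.sqrt (l0 + lam j) * (x ⬝ᵥ v j)) ^ 2 = (l0 + lam j) * (x ⬝ᵥ v j) ^ 2 := by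
          intro j
          rw [mul_pow, Real.sq_sqrt (hmu j).le]
        rw [Finset.sum_congr rfl (fun j _ => e1 j), Finset.sum_congr rfl (fun j _ => e2 j),
          Finset.sum_congr rfl (fun j _ => e3 j)] at h
        exact h
      have hkey : ct * (z ⬝ᵥ x) ^ 2 ≤ T := by
        rcases eq_or_lt_of_le hSnn with h0 | h0
        · rw [← h0, zero_mul] at hcs
          have hz0 : (z ⬝ᵥ x) ^ 2 = 0 := le_antisymm hcs (sq_nonneg _)
          rw [hz0, mul_zero]
          exact hTnn
        · have h1 : ct * S ≤ 1 := by
            calc ct * S ≤ S⁻¹ * S := mul_le_mul_of_nonneg_right hle' hSnn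
            _ = 1 := inv_mul_cancel₀ (ne_of_gt h0)
          calc ct * (z ⬝ᵥ x) ^ 2 ≤ ct * (S * T) := by
                exact mul_le_mul_of_nonneg_left hcs hct.le
          _ = (ct * S) * T := by ring
          _ ≤ 1 * T := mul_le_mul_of_nonneg_right h1 hTnn
          _ = T := one_mul T
      rw [hEbil, dotProduct_comm x z]
      have : ct * (z ⬝ᵥ x) * (z ⬝ᵥ x) = ct * (z ⬝ᵥ x) ^ 2 := by ring
      rw [this]
      linarith
    exact abs_le.mpr ⟨hlow, hup⟩
  -- bilinear bound
  have hbil : ∀ x y : Fin N → ℝ, x ⬝ᵥ x = 1 → y ⬝ᵥ y = 1 → x ⬝ᵥ (E *ᵥ y) ≤ l0 := by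
    intro x y hx hy
    have h1 := abs_le.mp (hq (x + y))
    have h2 := abs_le.mp (hq (x - y))
    have e1 : (x + y) ⬝ᵥ (E *ᵥ (x + y))
        = x ⬝ᵥ (E *ᵥ x) + 2 * (x ⬝ᵥ (E *ᵥ y)) + y ⬝ᵥ (E *ᵥ y) := by
      rw [Matrix.mulVec_add, dotProduct_add, add_dotProduct, add_dotProduct,
        hEsym y x]
      ring
    have e2 : (x - y) ⬝ᵥ (E *ᵥ (x - y))
        = x ⬝ᵥ (E *ᵥ x) - 2 * (x ⬝ᵥ (E *ᵥ y)) + y ⬝ᵥ (E *ᵥ y) := by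
      rw [Matrix.mulVec_sub, dotProduct_sub, sub_dotProduct, sub_dotProduct,
        hEsym y x]
      ring
    have n1 : (x + y) ⬝ᵥ (x + y) = 2 + 2 * (x ⬝ᵥ y) := by
      rw [dotProduct_add, add_dotProduct, add_dotProduct, dotProduct_comm y x, hx, hy]
      ring
    have n2 : (x - y) ⬝ᵥ (x - y) = 2 - 2 * (x ⬝ᵥ y) := by
      rw [dotProduct_sub, sub_dotProduct, sub_dotProduct, dotProduct_comm y x, hx, hy]
      ring
    rw [e1, n1] at h1
    rw [e2, n2] at h2
    linarith [h1.2, h2.1]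
  -- operator norm bound
  have hEnorm : ∀ x : Fin N → ℝ, x ⬝ᵥ x = 1 → rvnorm (E *ᵥ x) ≤ l0 := by
    intro x hx
    set u := E *ᵥ x with hu
    have hq2 : rvnorm u = Real.sqrt (u ⬝ᵥ u) := by
      unfold rvnorm
      congr 1
      exact Finset.sum_congr rfl fun i _ => (sq _)
    have hunn : 0 ≤ u ⬝ᵥ u := Finset.sum_nonneg fun i _ => mul_self_nonneg _
    rcases eq_or_lt_of_le hunn with h0 | h0
    · rw [hq2, ← h0, Real.sqrt_zero]; exact hl0pos.le
    · set t := Real.sqrt (u ⬝ᵥ u) with ht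
      have htpos : 0 < t := Real.sqrt_pos.mpr h0
      have ht2 : t ^ 2 = u ⬝ᵥ u := Real.sq_sqrt hunn
      have hy : (t⁻¹ • u) ⬝ᵥ (t⁻¹ • u) = 1 := by
        rw [smul_dotProduct, dotProduct_smul, smul_eq_mul, smul_eq_mul, ← ht2]
        field_simp
      have hb := hbil x (t⁻¹ • u) hx hy
      have hval : x ⬝ᵥ (E *ᵥ (t⁻¹ • u)) = t := by
        rw [Matrix.mulVec_smul, dotProduct_smul, smul_eq_mul, hEsym x u, ← hu, ← ht2]
        field_simp
      rw [hval] at hb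
      rw [hq2]
      exact hb
  -- the witness vector
  have hwit : ∃ w : Fin N → ℝ, w ⬝ᵥ w = 1 ∧ z ⬝ᵥ w = 0 ∧ A *ᵥ w = l0 • w := by
    set b0 := z ⬝ᵥ v ⟨0, h0N⟩ with hb0
    set b1 := z ⬝ᵥ v ⟨1, h1N⟩ with hb1
    have hAv0 : A *ᵥ v ⟨0, h0N⟩ = l0 • v ⟨0, h0N⟩ := heig _
    have hAv1 : A *ᵥ v ⟨1, h1N⟩ = l0 • v ⟨1, h1N⟩ := by rw [heig _, hl1]
    have hne : (⟨0, h0N⟩ : Fin N) ≠ ⟨1, h1N⟩ := by simp [Fin.ext_iff]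
    by_cases hb : b0 = 0
    · exact ⟨v ⟨0, h0N⟩, by simpa using horth ⟨0, h0N⟩ ⟨0, h0N⟩, hb, hAv0⟩
    · have hpos : 0 < b0 ^ 2 + b1 ^ 2 := by positivity
      set w0 : Fin N → ℝ := b1 • v ⟨0, h0N⟩ - b0 • v ⟨1, h1N⟩ with hw0
      have hw0n : w0 ⬝ᵥ w0 = b0 ^ 2 + b1 ^ 2 := by
        rw [hw0, dotProduct_sub, sub_dotProduct, sub_dotProduct, smul_dotProduct,
          smul_dotProduct, smul_dotProduct, smul_dotProduct, dotProduct_smul,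
          dotProduct_smul, dotProduct_smul, dotProduct_smul, horth, horth, horth, horth]
        simp [hne, hne.symm]
        ring
      have hzw0 : z ⬝ᵥ w0 = 0 := by
        rw [hw0, dotProduct_sub, dotProduct_smul, dotProduct_smul, ← hb0, ← hb1]
        simp [smul_eq_mul]
        ring
      have hAw0 : A *ᵥ w0 = l0 • w0 := by
        rw [hw0, Matrix.mulVec_sub, Matrix.mulVec_smul, Matrix.mulVec_smul, hAv0, hAv1,
          smul_sub, smul_comm b1 l0, smul_comm b0 l0]
      set s : ℝ := (Real.sqrt (b0 ^ 2 + b1 ^ 2))⁻¹ with hs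
      have hsq : Real.sqrt (b0 ^ 2 + b1 ^ 2) ^ 2 = b0 ^ 2 + b1 ^ 2 := Real.sq_sqrt hpos.le
      have hsqpos : 0 < Real.sqrt (b0 ^ 2 + b1 ^ 2) := Real.sqrt_pos.mpr hpos
      refine ⟨s • w0, ?_, ?_, ?_⟩
      · rw [smul_dotProduct, dotProduct_smul, smul_eq_mul, smul_eq_mul, hw0n, hs, ← hsq]
        field_simp
        rw [Real.sqrt_sq hsqpos.le]
      · rw [dotProduct_smul, hzw0, smul_zero]
      · rw [Matrix.mulVec_smul, hAw0, smul_comm]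
  obtain ⟨w, hw1, hzw, hAw⟩ := hwit
  have hEw : E *ᵥ w = l0 • w := by
    rw [hEmul, hzw, mul_zero, zero_smul, sub_zero, hAw]
  have hxxsum : ∀ x : Fin N → ℝ, x ⬝ᵥ x = ∑ i, x i ^ 2 :=
    fun x => Finset.sum_congr rfl fun i _ => (sq _).symm
  have hrvw : rvnorm w = 1 := by
    unfold rvnorm
    rw [← hxxsum w, hw1, Real.sqrt_one]
  have hrvEw : rvnorm (E *ᵥ w) = l0 := by
    rw [hEw]
    unfold rvnorm
    have : ∑ i, (l0 • w) i ^ 2 = l0 ^ 2 * ∑ i, w i ^ 2 := by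
      rw [Finset.mul_sum]
      exact Finset.sum_congr rfl fun i _ => by simp [smul_eq_mul]; ring
    rw [this, ← hxxsum w, hw1, mul_one, Real.sqrt_sq hl0pos.le]
  -- assemble
  set SE := {r : ℝ | ∃ x : Fin N → ℝ, rvnorm x = 1 ∧ r = rvnorm (E.mulVec x)} with hSE
  have hmem : l0 ∈ SE := ⟨w, hrvw, hrvEw.symm⟩
  have hub : ∀ r ∈ SE, r ≤ l0 := by
    rintro r ⟨x, hx, rfl⟩
    have hx1 : x ⬝ᵥ x = 1 := by
      unfold rvnorm at hx
      have h := Real.sqrt_eq_one.mp hx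
      rw [hxxsum x, h]
    exact hEnorm x hx1
  have hEeq : rspecNorm E = l0 :=
    le_antisymm (csSup_le ⟨l0, hmem⟩ hub) (le_csSup ⟨l0, hub⟩ hmem)
  rw [hEeq]
  exact hlam0
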